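/- Let g be the 6-dimensional nilpotent Lie algebra (0,0,12,13,23,14), i.e. de₁=de₂=0, de₃=e₁∧e₂, de₄=e₁∧e₃, de₅=e₂∧e₃, de₆=e₁∧e₄. The 2-form ω = e₁∧e₅ + e₂∧e₄ + e₃∧e₄ − e₂∧e₆ is closed and satisfies ω³ ≠ 0; i.e. g admits a symplectic form. -/

import Mathlib

/- STATEMENT 19: the 6-dimensional nilpotent Lie algebra `(0,0,12,13,23,14)`
admits the symplectic form `ω = e₁∧e₅ + e₂∧e₄ + e₃∧e₄ − e₂∧e₆`: it is closed and
`ω³ ≠ 0`.  Forms are modelled in `Λ•g*` with `g* = Fin 6 → ℝ`. -/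

noncomputable section

open ExteriorAlgebra

/-- The basis 1-forms `e₁,…,e₆` (0-indexed). -/
def e (i : Fin 6) : ExteriorAlgebra ℝ (Fin 6 → ℝ) := ι ℝ (Pi.single i 1)

/-- The values of `d` on the basis: `(0,0,12,13,23,14)` (0-indexed). -/
def D : Fin 6 → ExteriorAlgebra ℝ (Fin 6 → ℝ) :=
  ![0, 0, e 0 * e 1, e 0 * e 2, e 1 * e 2, e 0 * e 3]

/-- The 2-form `∑ k_{ij} e_i ∧ e_j` with coefficients `k`. -/
def twoForm (k : Fin 6 → Fin 6 → ℝ) : ExteriorAlgebra ℝ (Fin 6 → ℝ) :=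
  ∑ i, ∑ j, k i j • (e i * e j)

/-- `d` of the 2-form with coefficients `k` (derivation rule). -/
def dTwo (k : Fin 6 → Fin 6 → ℝ) : ExteriorAlgebra ℝ (Fin 6 → ℝ) :=
  ∑ i, ∑ j, k i j • (D i * e j - e i * D j)

/-- Coefficients of `ω = e₁∧e₅ + e₂∧e₄ + e₃∧e₄ − e₂∧e₆` (0-indexed). -/
def kω : Fin 6 → Fin 6 → ℝ := fun i j =>
  if i = 0 ∧ j = 4 then 1 else if i = 1 ∧ j = 3 then 1
    else if i = 2 ∧ j = 3 then 1 else if i = 1 ∧ j = 5 then -1 else 0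

lemma e_sq (i : Fin 6) : e i * e i = 0 := ι_sq_zero _

lemma e_swap (i j : Fin 6) (_h : j < i) : e i * e j = -(e j * e i) := by
  unfold e; exact eq_neg_of_add_eq_zero_left (ι_add_mul_swap _ _)

lemma e_swapR (i j : Fin 6) (x : ExteriorAlgebra ℝ (Fin 6 → ℝ)) (h : j < i) :
    e i * (e j * x) = -(e j * (e i * x)) := by
  rw [← mul_assoc, e_swap i j h, neg_mul, mul_assoc]

lemma e_sqR (i : Fin 6) (x : ExteriorAlgebra ℝ (Fin 6 → ℝ)) :
    e i * (e i * x) = 0 := by rw [← mul_assoc, e_sq, zero_mul]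

lemma dTwo_kω_eq_zero : dTwo kω = 0 := by
  simp only [dTwo, Fin.sum_univ_six, kω,
    show D 0 = 0 from rfl, show D 1 = 0 from rfl,
    show D 2 = e 0 * e 1 from rfl, show D 3 = e 0 * e 2 from rfl,
    show D 4 = e 1 * e 2 from rfl, show D 5 = e 0 * e 3 from rfl, Fin.reduceEq,
    if_true, if_false, and_true, true_and, and_false, false_and, and_self, ite_true, ite_false,
    one_smul, neg_smul, zero_smul, smul_zero, zero_mul, mul_zero, sub_zero, zero_sub, add_zero,
    zero_add, neg_neg, neg_zero]
  simp (config := { decide := true }) only [mul_assoc, e_swap, e_swapR, e_sq, e_sqR,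
    zero_mul, mul_zero, mul_neg, neg_mul, neg_neg, mul_one, one_mul, sub_zero, zero_sub,
    neg_zero, zero_add, add_zero]
  abel

lemma hω : twoForm kω = e 0 * e 4 + e 1 * e 3 + e 2 * e 3 - e 1 * e 5 := by
  simp only [twoForm, Fin.sum_univ_six, kω, Fin.reduceEq,
    and_true, true_and, and_false, false_and, and_self, ite_true, ite_false,
    one_smul, neg_smul, zero_smul, add_zero, zero_add]
  abel

/-- The ordered top product `e₁∧⋯∧e₆`. -/
def Eprod : ExteriorAlgebra ℝ (Fin 6 → ℝ) := e 0 * (e 1 * (e 2 * (e 3 * (e 4 * e 5))))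

lemma hcube : twoForm kω * twoForm kω * twoForm kω = (6:ℝ) • Eprod := by
  rw [hω]
  simp only [Eprod, mul_add, add_mul, mul_sub, sub_mul, mul_neg, neg_mul]
  simp (config := { decide := true }) only [mul_assoc, e_swap, e_swapR, e_sq, e_sqR,
    zero_mul, mul_zero, mul_neg, neg_mul, neg_neg, mul_one, one_mul, sub_zero, zero_sub,
    neg_zero, zero_add, add_zero]
  module

/-- Degree-wise alternating maps: the determinant in degree 6, zero elsewhere. -/
def F : ∀ i : ℕ, ((Fin 6 → ℝ) [⋀^Fin i]→ₗ[ℝ] ℝ)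
  | 6 => (Pi.basisFun ℝ (Fin 6)).det
  | _ => 0

lemma Eprod_ne : Eprod ≠ 0 := by
  intro h
  have h2 : Eprod = ιMulti ℝ 6 (fun i : Fin 6 => (Pi.single i 1 : Fin 6 → ℝ)) := by
    rw [ιMulti_apply]
    simp only [Eprod, List.ofFn_succ, List.ofFn_zero, List.prod_cons, List.prod_nil,
      Matrix.cons_val_zero, Matrix.cons_val_one, Matrix.head_cons, e, mul_one, mul_assoc]
    rfl
  rw [h2] at h
  have h3 := congrArg (liftAlternating (R := ℝ) F) h
  rw [liftAlternating_apply_ιMulti, map_zero] at h3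
  have h4 : (fun i : Fin 6 => (Pi.single i 1 : Fin 6 → ℝ)) = ⇑(Pi.basisFun ℝ (Fin 6)) := by
    funext i
    simp [Pi.basisFun_apply]
  have h5 : F 6 (fun i : Fin 6 => (Pi.single i 1 : Fin 6 → ℝ)) = 1 := by
    rw [show F 6 = (Pi.basisFun ℝ (Fin 6)).det from rfl, h4]
    with_reducible exact Module.Basis.det_self _
  rw [h5] at h3
  exact one_ne_zero h3

/-- `ω` is closed and `ω³ ≠ 0`, i.e. `g` admits a symplectic form. -/
theorem symplectic_0_0_12_13_23_14 :
    dTwo kω = 0 ∧ twoForm kω * twoForm kω * twoForm kω ≠ 0 := by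
  refine ⟨dTwo_kω_eq_zero, ?_⟩
  rw [hcube]
  simp [Eprod_ne]

end
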